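/- For any real inner product space V, any self-adjoint operator T with ‖T‖ ≤ 1, and unit vectors a, b, b̃ ∈ V satisfying ⟨b, T b⟩ = 1, the inequality |⟨a, T(b − b̃)⟩| + ⟨b, T b̃⟩ ≤ 3/2 holds. -/
import Mathlib


open RealInnerProductSpace

/-- For a self-adjoint operator `T` with `‖T‖ ≤ 1` and unit vectors `a, b, b̃`
with `⟪b, T b⟫ = 1`, one has `|⟪a, T (b − b̃)⟫| + ⟪b, T b̃⟫ ≤ 3/2`. -/
theorem stmt_2 {V : Type*} [NormedAddCommGroup V] [InnerProductSpace ℝ V]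
    [FiniteDimensional ℝ V] (T : V →L[ℝ] V)
    (hsym : ∀ x y : V, ⟪T x, y⟫ = ⟪x, T y⟫) (hnorm : ‖T‖ ≤ 1)
    (a b btil : V) (ha : ‖a‖ = 1) (hb : ‖b‖ = 1) (hbtil : ‖btil‖ = 1)
    (hperf : ⟪b, T b⟫ = 1) :
    |⟪a, T (b - btil)⟫| + ⟪b, T btil⟫ ≤ 3 / 2 := by
  have hTb1 : ‖T b‖ ≤ 1 := by
    calc ‖T b‖ ≤ ‖T‖ * ‖b‖ := T.le_opNorm b
      _ ≤ 1 := by rw [hb]; simpa using hnorm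
  have hTb : T b = b := by
    have hsq : ‖T b - b‖ ^ 2 ≤ 0 := by
      rw [norm_sub_sq_real, hb]
      nlinarith [norm_nonneg (T b), real_inner_comm (T b) b, hperf]
    have h0 : ‖T b - b‖ = 0 :=
      le_antisymm (by nlinarith [norm_nonneg (T b - b)]) (norm_nonneg _)
    exact sub_eq_zero.mp (norm_eq_zero.mp h0)
  -- ⟪b, T btil⟫ = ⟪b, btil⟫
  have hbt : ⟪b, T btil⟫ = ⟪b, btil⟫ := by
    rw [← hsym b btil, hTb]
  set u : V := b - T btil with hu
  have harg : ⟪a, T (b - btil)⟫ = ⟪a, u⟫ := by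
    rw [map_sub, hTb]
  have hau : |⟪a, u⟫| ≤ ‖u‖ := by
    have := abs_real_inner_le_norm a u
    rwa [ha, one_mul] at this
  have hTbtil : ‖T btil‖ ≤ 1 := by
    calc ‖T btil‖ ≤ ‖T‖ * ‖btil‖ := T.le_opNorm btil
      _ ≤ 1 := by rw [hbtil]; simpa using hnorm
  have husq : ‖u‖ ^ 2 ≤ 2 - 2 * ⟪b, btil⟫ := by
    rw [hu, norm_sub_sq_real, hb]
    have : ⟪b, T btil⟫ = ⟪b, btil⟫ := hbt
    nlinarith [norm_nonneg (T btil)]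
  rw [harg, hbt]
  nlinarith [sq_nonneg (‖u‖ - 1), norm_nonneg u, hau, husq]
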